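/- For every prime p ≥ 3, 3/2^{θ_p + 1} < 1/2, where θ_p = log(p(p+1)/2)/log p. Consequently, for p ≥ 3 the function c_p(u) = N_p(u)/u^{θ_p} (counting along anti-diagonals m+n < u of points with p ∤ C(m,n)) has at least two distinct accumulation points, namely 1/2 and 3/2^{θ_p + 1}, hence does not converge as u → ∞. -/

import Mathlib

open Filter

/-- `N_p(u)`: number of `(m,n)` with `m ≥ n ≥ 0`, `p ∤ C(m,n)` and `m + n < u`. -/
noncomputable def Npas (p : ℕ) (u : ℕ) : ℕ :=
  {mn : ℕ × ℕ | mn.2 ≤ mn.1 ∧ mn.1 + mn.2 < u ∧ ¬ p ∣ Nat.choose mn.1 mn.2}.ncard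

/-- `θ_p = log(p(p+1)/2)/log p`. -/
noncomputable def theta (p : ℕ) : ℝ := Real.log (p * (p + 1) / 2) / Real.log p

/-- `c_p(u) = N_p(u)/u^{θ_p}`. -/
noncomputable def cpas (p : ℕ) (u : ℕ) : ℝ := (Npas p u : ℝ) / (u : ℝ) ^ theta p

open Finset
open scoped Classical

/-- digitwise ≤ in base `p`. -/
def Dle (p m n : ℕ) : Prop := ∀ i, n / p ^ i % p ≤ m / p ^ i % p

lemma dle_iff (p m n : ℕ) : Dle p m n ↔ n % p ≤ m % p ∧ Dle p (m / p) (n / p) := by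
  constructor
  · intro h
    refine ⟨by simpa using h 0, fun i => ?_⟩
    have := h (i + 1)
    simpa [Nat.div_div_eq_div_mul, pow_succ'] using this
  · rintro ⟨h0, h⟩ i
    cases i with
    | zero => simpa using h0
    | succ i =>
      have := h i
      simpa [Nat.div_div_eq_div_mul, pow_succ'] using this

lemma Dle.le {p : ℕ} (hp : 2 ≤ p) : ∀ {n m : ℕ}, Dle p m n → n ≤ m := by
  intro n
  induction n using Nat.strong_induction_on with
  | _ n ih =>
    intro m h
    rcases Nat.eq_zero_or_pos n with h0 | h0
    · omega
    · rw [dle_iff] at h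
      have h1 : n / p ≤ m / p := ih (n / p) (Nat.div_lt_self h0 (by omega)) h.2
      have h2 := Nat.div_add_mod n p
      have h3 := Nat.div_add_mod m p
      have h4 : p * (n / p) ≤ p * (m / p) := Nat.mul_le_mul_left p h1
      omega

lemma dle_small {p : ℕ} (hp : 2 ≤ p) {m : ℕ} (hm : m < p) (n : ℕ) : Dle p m n ↔ n ≤ m := by
  constructor
  · exact fun h => Dle.le hp h
  · intro hnm i
    cases i with
    | zero =>
      simp only [pow_zero, Nat.div_one]
      rw [Nat.mod_eq_of_lt (by omega), Nat.mod_eq_of_lt hm]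
      exact hnm
    | succ i =>
      have hn : n < p ^ (i + 1) :=
        lt_of_lt_of_le (by omega) (Nat.le_self_pow (Nat.succ_ne_zero i) p)
      simp [Nat.div_eq_of_lt hn]

lemma dle_zero_iff {p : ℕ} (hp : 2 ≤ p) (n : ℕ) : Dle p 0 n ↔ n = 0 := by
  rw [dle_small hp (by omega)]; omega

lemma prime_dvd_choose_small {p : ℕ} (hp : p.Prime) {a b : ℕ} (ha : a < p) :
    p ∣ Nat.choose a b ↔ ¬ b ≤ a := by
  constructor
  · intro h hba
    have hdvd : Nat.choose a b ∣ Nat.factorial a := by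
      refine ⟨Nat.factorial b * Nat.factorial (a - b), ?_⟩
      rw [← Nat.choose_mul_factorial_mul_factorial hba, mul_assoc]
    have : p ∣ Nat.factorial a := h.trans hdvd
    have := (Nat.Prime.dvd_factorial hp).mp this
    omega
  · intro h
    rw [Nat.choose_eq_zero_of_lt (by omega)]
    exact dvd_zero p

lemma not_dvd_choose_iff_dle {p : ℕ} (hp : p.Prime) : ∀ m n : ℕ,
    (¬ p ∣ Nat.choose m n) ↔ Dle p m n := by
  have : Fact p.Prime := ⟨hp⟩
  intro m
  induction m using Nat.strong_induction_on with
  | _ m ih =>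
    intro n
    rcases Nat.eq_zero_or_pos m with hm0 | hm0
    · subst hm0
      rw [dle_zero_iff hp.two_le]
      rcases Nat.eq_zero_or_pos n with hn0 | hn0
      · subst hn0; simp [Nat.dvd_one, hp.ne_one]
      · rw [Nat.choose_eq_zero_of_lt (by omega)]
        simp; omega
    · have lucas := Choose.choose_modEq_choose_mod_mul_choose_div_nat (n := m) (k := n) (p := p)
      have hdvd : p ∣ Nat.choose m n ↔
          p ∣ Nat.choose (m % p) (n % p) * Nat.choose (m / p) (n / p) :=
        lucas.dvd_iff dvd_rfl
      rw [hdvd, hp.dvd_mul, dle_iff]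
      rw [prime_dvd_choose_small hp (Nat.mod_lt _ hp.pos)]
      rw [← ih (m / p) (Nat.div_lt_self hm0 hp.one_lt) (n / p)]
      tauto

open scoped Classical in
/-- number of `n < t` with `n` digitwise `≤ m` in base `p`. -/
noncomputable def W (p m t : ℕ) : ℕ := ((range t).filter (fun n => Dle p m n)).card

lemma W_zero (p m : ℕ) : W p m 0 = 0 := by simp [W]

open scoped Classical in
lemma W_succ (p m t : ℕ) : W p m (t + 1) = W p m t + (if Dle p m t then 1 else 0) := by
  rw [W, W, Finset.range_add_one, Finset.filter_insert]
  by_cases h : Dle p m t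
  · rw [if_pos h, if_pos h, Finset.card_insert_of_notMem (by simp)]
  · rw [if_neg h, if_neg h, add_zero]

lemma W_stable {p : ℕ} (hp : 2 ≤ p) {m t : ℕ} (ht : m + 1 ≤ t) : W p m t = W p m (m + 1) := by
  classical
  rw [W, W]
  congr 1
  ext n
  simp only [Finset.mem_filter, Finset.mem_range]
  constructor
  · rintro ⟨h1, h2⟩
    exact ⟨by have := Dle.le hp h2; omega, h2⟩
  · rintro ⟨h1, h2⟩
    exact ⟨by omega, h2⟩

lemma W_zero_one {p : ℕ} (hp : 2 ≤ p) : W p 0 1 = 1 := by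
  classical
  rw [W]
  rw [show (range 1) = {0} by rfl]
  rw [Finset.filter_singleton, if_pos (by rw [dle_zero_iff hp])]
  rfl

lemma dle_split {p : ℕ} (hp : 2 ≤ p) : ∀ {k d r : ℕ}, d < p → r < p ^ k → ∀ n : ℕ,
    (Dle p (d * p ^ k + r) n ↔ n / p ^ k ≤ d ∧ Dle p r (n % p ^ k)) := by
  intro k
  induction k with
  | zero =>
    intro d r hd hr n
    simp only [pow_zero, mul_one, Nat.div_one, Nat.mod_one] at *
    have hr0 : r = 0 := by omega
    subst hr0
    rw [add_zero, dle_small hp hd, dle_zero_iff hp]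
    omega
  | succ k ih =>
    intro d r hd hr n
    rw [dle_iff]
    have e1 : d * p ^ (k + 1) + r = p * (d * p ^ k) + r := by ring
    have h1 : (d * p ^ (k + 1) + r) % p = r % p := by
      rw [e1, Nat.mul_add_mod]
    have h2 : (d * p ^ (k + 1) + r) / p = d * p ^ k + r / p := by
      rw [e1, Nat.mul_add_div (by omega)]
    have hrp : r / p < p ^ k := by
      rw [Nat.div_lt_iff_lt_mul (by omega), ← pow_succ]
      exact hr
    rw [h1, h2, ih hd hrp (n / p)]
    have h3 : n / p / p ^ k = n / p ^ (k + 1) := by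
      rw [Nat.div_div_eq_div_mul, ← pow_succ']
    have h4 : n % p ^ (k + 1) % p = n % p :=
      Nat.mod_mod_of_dvd n (dvd_pow_self p (Nat.succ_ne_zero k))
    have h5 : n % p ^ (k + 1) / p = n / p % p ^ k := by
      rw [← Nat.mod_mul_right_div_self, ← pow_succ']
    rw [h3, dle_iff p r (n % p ^ (k + 1)), h4, h5]
    tauto

lemma div_mul_mod_facts (t v : ℕ) (hv : 0 < v) :
    t / v * v ≤ t ∧ t - t / v * v = t % v ∧ t % v < v := by
  have h1 := Nat.div_add_mod t v
  have h2 : v * (t / v) = t / v * v := mul_comm _ _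
  have h3 : t % v < v := Nat.mod_lt _ hv
  omega

lemma div_mod_of {v t e : ℕ} (h1 : e * v ≤ t) (h2 : t < e * v + v) :
    t / v = e ∧ t % v = t - e * v := by
  have hd : t / v = e := Nat.div_eq_of_lt_le h1 (by rw [add_mul, one_mul]; omega)
  refine ⟨hd, ?_⟩
  have hdm := Nat.div_add_mod t v
  rw [hd] at hdm
  have hcm : v * e = e * v := mul_comm _ _
  omega

open scoped Classical in
lemma W_split {p : ℕ} (hp : 2 ≤ p) {k d r : ℕ} (hd : d < p) (hr : r < p ^ k) (t : ℕ) :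
    W p (d * p ^ k + r) t = ∑ e ∈ range (d + 1), W p r (t - e * p ^ k) := by
  induction t with
  | zero => simp [W_zero]
  | succ t iht =>
    rw [W_succ, iht]
    have hpk : 0 < p ^ k := Nat.pow_pos (by omega)
    have key : (if Dle p (d * p ^ k + r) t then 1 else 0) =
        ∑ e ∈ range (d + 1), (if e * p ^ k ≤ t ∧ Dle p r (t - e * p ^ k) then 1 else 0) := by
      obtain ⟨hq1, hq2, hq3⟩ := div_mul_mod_facts t (p ^ k) hpk
      by_cases hc : t / p ^ k ≤ d ∧ Dle p r (t % p ^ k)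
      · rw [if_pos ((dle_split hp hd hr t).mpr hc)]
        rw [Finset.sum_eq_single (t / p ^ k)]
        · rw [if_pos ⟨hq1, by rw [hq2]; exact hc.2⟩]
        · intro e he hne
          rw [if_neg]
          rintro ⟨h1, h2⟩
          have h3 := Dle.le hp h2
          obtain ⟨hq, hm⟩ := div_mod_of h1 (by omega)
          exact hne hq.symm
        · intro hnot
          exact absurd (Finset.mem_range.mpr (Nat.lt_succ_of_le hc.1)) hnot
      · rw [if_neg (fun h => hc ((dle_split hp hd hr t).mp h))]
        symm
        apply Finset.sum_eq_zero
        intro e he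
        rw [Finset.mem_range] at he
        rw [if_neg]
        rintro ⟨h1, h2⟩
        have h3 := Dle.le hp h2
        obtain ⟨hq, hm⟩ := div_mod_of h1 (by omega)
        refine hc ⟨by rw [hq]; omega, ?_⟩
        rw [hm]; exact h2
    rw [key, ← Finset.sum_add_distrib]
    apply Finset.sum_congr rfl
    intro e he
    by_cases hle : e * p ^ k ≤ t
    · have h1 : t + 1 - e * p ^ k = (t - e * p ^ k) + 1 := by omega
      rw [h1, W_succ]
      congr 1
      by_cases hD : Dle p r (t - e * p ^ k) <;> simp [hD, hle]
    · have h1 : t + 1 - e * p ^ k = 0 := by omega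
      have h2 : t - e * p ^ k = 0 := by omega
      rw [h1, h2, W_zero, if_neg (by tauto)]

lemma W_def (p m t : ℕ) : W p m t = ((range t).filter (fun n => Dle p m n)).card := rfl

lemma npas_eq_sum {p : ℕ} (hp : p.Prime) (u : ℕ) :
    Npas p u = ∑ m ∈ range u, W p m (u - m) := by
  have hset : {mn : ℕ × ℕ | mn.2 ≤ mn.1 ∧ mn.1 + mn.2 < u ∧ ¬ p ∣ Nat.choose mn.1 mn.2} =
      ↑((range u ×ˢ range u).filter
        (fun mn => mn.2 ≤ mn.1 ∧ mn.1 + mn.2 < u ∧ ¬ p ∣ Nat.choose mn.1 mn.2)) := by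
    ext ⟨m, n⟩
    simp only [Set.mem_setOf_eq, coe_filter, mem_product, mem_range, Set.mem_setOf_eq]
    constructor
    · rintro ⟨h1, h2, h3⟩
      exact ⟨⟨by omega, by omega⟩, h1, h2, h3⟩
    · rintro ⟨-, h⟩
      exact h
  rw [Npas, hset, Set.ncard_coe_finset, Finset.card_filter, Finset.sum_product]
  apply Finset.sum_congr rfl
  intro m hm
  rw [← Finset.card_filter, W_def]
  apply congrArg Finset.card
  ext n
  simp only [Finset.mem_filter, Finset.mem_range]
  rw [not_dvd_choose_iff_dle hp]
  constructor
  · rintro ⟨h1, h2, h3, h4⟩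
    exact ⟨by omega, h4⟩
  · rintro ⟨h1, h2⟩
    have h3 := Dle.le hp.two_le h2
    exact ⟨by omega, h3, by omega, h2⟩

/-- number of digitwise-below entries in row `m`. -/
noncomputable def Fd (p m : ℕ) : ℕ := W p m (m + 1)
lemma Fd_def (p m : ℕ) : Fd p m = W p m (m + 1) := rfl

noncomputable def Tt (p k : ℕ) : ℕ := ∑ m ∈ range (p ^ k), Fd p m
noncomputable def Aa (p k : ℕ) : ℕ := ∑ m ∈ range (p ^ k), W p m (p ^ k - m)

lemma sum_range_mul' {M : Type*} [AddCommMonoid M] (f : ℕ → M) (a b : ℕ) :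
    ∑ m ∈ range (a * b), f m = ∑ d ∈ range a, ∑ r ∈ range b, f (d * b + r) := by
  induction a with
  | zero => simp
  | succ a ih =>
    rw [add_mul, one_mul, Finset.sum_range_add, ih, Finset.sum_range_succ]

lemma Fd_split {p : ℕ} (hp : 2 ≤ p) {k d r : ℕ} (hd : d < p) (hr : r < p ^ k) :
    Fd p (d * p ^ k + r) = (d + 1) * Fd p r := by
  rw [Fd, W_split hp hd hr]
  have hterm : ∀ e ∈ range (d + 1), W p r (d * p ^ k + r + 1 - e * p ^ k) = Fd p r := by
    intro e he
    rw [Finset.mem_range] at he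
    have hsub : (d - e) * p ^ k + e * p ^ k = d * p ^ k := by
      rw [← add_mul]
      congr 1
      omega
    have harg : d * p ^ k + r + 1 - e * p ^ k = (d - e) * p ^ k + (r + 1) := by omega
    rw [harg, W_stable hp (by omega), Fd]
  rw [Finset.sum_congr rfl hterm, Finset.sum_const, Finset.card_range, smul_eq_mul]

lemma Tt_zero {p : ℕ} (hp : 2 ≤ p) : Tt p 0 = 1 := by
  rw [Tt, pow_zero, Finset.sum_range_one, Fd, W_zero_one hp]

lemma Tt_succ {p : ℕ} (hp : 2 ≤ p) (k : ℕ) :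
    Tt p (k + 1) = (∑ d ∈ range p, (d + 1)) * Tt p k := by
  rw [Tt, pow_succ', sum_range_mul', Finset.sum_mul]
  apply Finset.sum_congr rfl
  intro d hd
  rw [Finset.mem_range] at hd
  rw [Tt, Finset.mul_sum]
  apply Finset.sum_congr rfl
  intro r hr
  rw [Finset.mem_range] at hr
  exact Fd_split hp hd hr

lemma Aa_zero {p : ℕ} (hp : 2 ≤ p) : Aa p 0 = 1 := by
  rw [Aa, pow_zero, Finset.sum_range_one, Nat.sub_zero, W_zero_one hp]

lemma sum_ite_inner {p : ℕ} (d X Y : ℕ) (hd : d < p) :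
    ∑ e ∈ range (d + 1), (if d + e + 2 ≤ p then X else if d + e + 1 = p then Y else 0)
      = min (d + 1) (p - 1 - d) * X + (if p ≤ 2 * d + 1 then 1 else 0) * Y := by
  have split : ∀ e ∈ range (d + 1),
      (if d + e + 2 ≤ p then X else if d + e + 1 = p then Y else 0)
      = (if e < p - 1 - d then X else 0) + (if e = p - 1 - d ∧ p ≤ 2 * d + 1 then Y else 0) := by
    intro e he
    rw [Finset.mem_range] at he
    split_ifs <;> omega
  rw [Finset.sum_congr rfl split, Finset.sum_add_distrib]
  congr 1
  · rw [← Finset.sum_filter, Finset.sum_const, smul_eq_mul]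
    have hfe : (range (d + 1)).filter (fun e => e < p - 1 - d)
        = range (min (d + 1) (p - 1 - d)) := by
      ext x
      simp only [Finset.mem_filter, Finset.mem_range]
      omega
    rw [hfe, Finset.card_range]
  · by_cases hQ : p ≤ 2 * d + 1
    · simp only [hQ, and_true]
      rw [Finset.sum_ite_eq' (range (d + 1)) (p - 1 - d) (fun _ => Y),
        if_pos (Finset.mem_range.mpr (by omega))]
      simp
    · simp only [hQ, and_false, if_false]
      simp [hQ]

lemma Aa_succ {p : ℕ} (hp : 2 ≤ p) (k : ℕ) :
    Aa p (k + 1) = (∑ d ∈ range p, min (d + 1) (p - 1 - d)) * Tt p k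
      + (∑ d ∈ range p, if p ≤ 2 * d + 1 then 1 else 0) * Aa p k := by
  rw [Aa, pow_succ', sum_range_mul', Finset.sum_mul, Finset.sum_mul, ← Finset.sum_add_distrib]
  apply Finset.sum_congr rfl
  intro d hd
  rw [Finset.mem_range] at hd
  have step1 : ∀ r ∈ range (p ^ k), W p (d * p ^ k + r) (p * p ^ k - (d * p ^ k + r))
      = ∑ e ∈ range (d + 1), W p r (p * p ^ k - (d * p ^ k + r) - e * p ^ k) := by
    intro r hr
    exact W_split hp hd (Finset.mem_range.mp hr) _
  rw [Finset.sum_congr rfl step1, Finset.sum_comm]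
  have inner : ∀ e ∈ range (d + 1),
      ∑ r ∈ range (p ^ k), W p r (p * p ^ k - (d * p ^ k + r) - e * p ^ k)
      = if d + e + 2 ≤ p then Tt p k else if d + e + 1 = p then Aa p k else 0 := by
    intro e he
    rw [Finset.mem_range] at he
    by_cases h1 : d + e + 2 ≤ p
    · rw [if_pos h1, Tt]
      apply Finset.sum_congr rfl
      intro r hr
      rw [Finset.mem_range] at hr
      have hmul : d * p ^ k + e * p ^ k + (p - d - e) * p ^ k = p * p ^ k := by
        calc d * p ^ k + e * p ^ k + (p - d - e) * p ^ k = (d + e + (p - d - e)) * p ^ k := by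
              ring
        _ = p * p ^ k := by rw [show d + e + (p - d - e) = p by omega]
      have h2pk : 2 * p ^ k ≤ (p - d - e) * p ^ k := Nat.mul_le_mul_right _ (by omega)
      have harg : p * p ^ k - (d * p ^ k + r) - e * p ^ k = (p - d - e) * p ^ k - r := by
        omega
      rw [harg, W_stable hp (by omega)]
      exact (Fd_def p r).symm
    · by_cases h2 : d + e + 1 = p
      · rw [if_neg h1, if_pos h2, Aa]
        apply Finset.sum_congr rfl
        intro r hr
        rw [Finset.mem_range] at hr
        congr 1
        have hmul : d * p ^ k + e * p ^ k + p ^ k = p * p ^ k := by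
          calc d * p ^ k + e * p ^ k + p ^ k = (d + e + 1) * p ^ k := by ring
          _ = p * p ^ k := by rw [h2]
        omega
      · rw [if_neg h1, if_neg h2]
        apply Finset.sum_eq_zero
        intro r hr
        have hmul : p * p ^ k ≤ d * p ^ k + e * p ^ k := by
          calc p * p ^ k ≤ (d + e) * p ^ k := Nat.mul_le_mul_right _ (by omega)
          _ = d * p ^ k + e * p ^ k := add_mul d e _
        have h0 : p * p ^ k - (d * p ^ k + r) - e * p ^ k = 0 := by omega
        rw [h0, W_zero]
  rw [Finset.sum_congr rfl inner]
  exact sum_ite_inner d (Tt p k) (Aa p k) hd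

lemma Bb_eq {p : ℕ} (hp : 2 ≤ p) (k : ℕ) :
    ∑ m ∈ range (2 * p ^ k), W p m (2 * p ^ k - m) = Tt p k + Aa p k := by
  have hpk : 0 < p ^ k := Nat.pow_pos (by omega)
  rw [two_mul, Finset.sum_range_add]
  congr 1
  · rw [Tt]
    apply Finset.sum_congr rfl
    intro m hm
    rw [Finset.mem_range] at hm
    rw [W_stable hp (by omega)]
    exact (Fd_def p m).symm
  · rw [Aa]
    apply Finset.sum_congr rfl
    intro r hr
    rw [Finset.mem_range] at hr
    rw [show p ^ k + r = 1 * p ^ k + r by ring, W_split hp (by omega) hr]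
    rw [Finset.sum_range_succ, Finset.sum_range_one]
    have e0 : p ^ k + (p ^ k + p ^ k - (1 * p ^ k + r) - 0 * p ^ k) = p ^ k + (p ^ k - r) := by
      have h1 : 1 * p ^ k = p ^ k := one_mul _
      have h0 : 0 * p ^ k = 0 := zero_mul _
      omega
    have e1 : p ^ k + p ^ k - (1 * p ^ k + r) - 1 * p ^ k = 0 := by
      have h1 : 1 * p ^ k = p ^ k := one_mul _
      omega
    rw [e1, W_zero, add_zero, show p ^ k + p ^ k - (1 * p ^ k + r) - 0 * p ^ k = p ^ k - r by omega]

/-- Gauss sums -/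
lemma count1 {h : ℕ} : ∑ d ∈ range (2 * h + 1), min (d + 1) (2 * h + 1 - 1 - d) = h * (h + 1) := by
  rw [show 2 * h + 1 = h + (h + 1) by omega, Finset.sum_range_add]
  have s1 : ∑ d ∈ range h, min (d + 1) (h + (h + 1) - 1 - d) = ∑ i ∈ range (h + 1), i := by
    rw [Finset.sum_range_succ' (fun i => i) h]
    simp only [add_zero]
    apply Finset.sum_congr rfl
    intro x hx
    rw [Finset.mem_range] at hx
    omega
  have s2 : ∑ x ∈ range (h + 1), min (h + x + 1) (h + (h + 1) - 1 - (h + x))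
      = ∑ i ∈ range (h + 1), i := by
    rw [← Finset.sum_range_reflect (fun j => j) (h + 1)]
    apply Finset.sum_congr rfl
    intro x hx
    rw [Finset.mem_range] at hx
    omega
  rw [s1, s2]
  have g := Finset.sum_range_id_mul_two (h + 1)
  rw [Nat.add_sub_cancel] at g
  have hc2 : (h + 1) * h = h * (h + 1) := Nat.mul_comm _ _
  omega

lemma count2 {h : ℕ} :
    (∑ d ∈ range (2 * h + 1), if 2 * h + 1 ≤ 2 * d + 1 then 1 else 0) = h + 1 := by
  rw [← Finset.card_filter]
  rw [show (range (2 * h + 1)).filter (fun d => 2 * h + 1 ≤ 2 * d + 1) = Finset.Ico h (2 * h + 1)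
    from ?_]
  · rw [Nat.card_Ico]; omega
  · ext x
    simp only [Finset.mem_filter, Finset.mem_range, Finset.mem_Ico]
    omega

lemma gauss_succ (p : ℕ) : 2 * (∑ d ∈ range p, (d + 1)) = (p + 1) * p := by
  have e : ∑ i ∈ range (p + 1), i = ∑ d ∈ range p, (d + 1) := by
    rw [Finset.sum_range_succ' (fun i => i) p]
    simp
  have g := Finset.sum_range_id_mul_two (p + 1)
  rw [Nat.add_sub_cancel] at g
  omega

lemma Tt_pow {p h : ℕ} (hph : p = 2 * h + 1) (hh : 1 ≤ h) (k : ℕ) :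
    Tt p k = ((2 * h + 1) * (h + 1)) ^ k := by
  have hp : 2 ≤ p := by omega
  induction k with
  | zero => rw [Tt_zero hp, pow_zero]
  | succ k ih =>
    rw [Tt_succ hp, ih, pow_succ]
    have hg := gauss_succ p
    have he : (p + 1) * p = 2 * ((2 * h + 1) * (h + 1)) := by
      subst hph; ring
    have : ∑ d ∈ range p, (d + 1) = (2 * h + 1) * (h + 1) := by omega
    rw [this]
    ring

lemma Aa_closed {p h : ℕ} (hph : p = 2 * h + 1) (hh : 1 ≤ h) (k : ℕ) :
    2 * Aa p k = ((2 * h + 1) * (h + 1)) ^ k + (h + 1) ^ k := by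
  have hp : 2 ≤ p := by omega
  induction k with
  | zero => rw [Aa_zero hp]; simp
  | succ k ih =>
    have hcount1 : ∑ d ∈ range p, min (d + 1) (p - 1 - d) = h * (h + 1) := by
      subst hph; exact count1
    have hcount2 : (∑ d ∈ range p, if p ≤ 2 * d + 1 then 1 else 0) = h + 1 := by
      subst hph; exact count2
    rw [Aa_succ hp k, hcount1, hcount2, Tt_pow hph hh k]
    calc 2 * (h * (h + 1) * ((2 * h + 1) * (h + 1)) ^ k + (h + 1) * Aa p k)
        = 2 * (h * (h + 1)) * ((2 * h + 1) * (h + 1)) ^ k + (h + 1) * (2 * Aa p k) := by ring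
      _ = 2 * (h * (h + 1)) * ((2 * h + 1) * (h + 1)) ^ k
          + (h + 1) * (((2 * h + 1) * (h + 1)) ^ k + (h + 1) ^ k) := by rw [ih]
      _ = ((2 * h + 1) * (h + 1)) ^ (k + 1) + (h + 1) ^ (k + 1) := by ring

theorem cpas_not_convergent_of_three_le (p : ℕ) (hp : p.Prime) (hp3 : 3 ≤ p) :
    3 / (2 : ℝ) ^ (theta p + 1) < 1 / 2 ∧
    MapClusterPt ((1 : ℝ) / 2) atTop (fun u : ℕ => cpas p u) ∧
    MapClusterPt (3 / (2 : ℝ) ^ (theta p + 1)) atTop (fun u : ℕ => cpas p u) ∧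
    ¬ ∃ L : ℝ, Tendsto (fun u : ℕ => cpas p u) atTop (nhds L) := by
  obtain ⟨h, hph⟩ : ∃ h, p = 2 * h + 1 := by
    obtain ⟨h, hh⟩ := hp.odd_of_ne_two (by omega)
    exact ⟨h, hh⟩
  have hh1 : 1 ≤ h := by omega
  obtain ⟨q, hq_def⟩ : ∃ q, q = (2 * h + 1) * (h + 1) := ⟨_, rfl⟩
  obtain ⟨s, hs_def⟩ : ∃ s, s = h + 1 := ⟨_, rfl⟩
  -- ℕ-facts
  have hA : ∀ k : ℕ, 2 * Npas p (p ^ k) = q ^ k + s ^ k := by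
    intro k
    have h1 : Npas p (p ^ k) = Aa p k := by rw [npas_eq_sum hp, Aa]
    rw [h1, Aa_closed hph hh1 k, ← hq_def, ← hs_def]
  have hB : ∀ k : ℕ, 2 * Npas p (2 * p ^ k) = 3 * q ^ k + s ^ k := by
    intro k
    have h1 : Npas p (2 * p ^ k) = Tt p k + Aa p k := by
      rw [npas_eq_sum hp, Bb_eq hp.two_le]
    rw [h1, Nat.mul_add, Aa_closed hph hh1 k, Tt_pow hph hh1 k, ← hq_def, ← hs_def]
    ring
  -- ℝ-facts
  have hp0 : (0 : ℝ) < p := by positivity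
  have hp1 : (1 : ℝ) < p := by exact_mod_cast (by omega : 1 < p)
  have hlogp : 0 < Real.log p := Real.log_pos hp1
  have hqgt : 1 < q := by
    have := Nat.mul_le_mul (show 2 ≤ 2 * h + 1 by omega) (show 1 ≤ h + 1 by omega)
    omega
  have hq0 : (0 : ℝ) < q := by exact_mod_cast (by omega : 0 < q)
  have hq1 : (1 : ℝ) < q := by exact_mod_cast hqgt
  have hs0 : (0 : ℝ) < s := by
    have : 0 < s := by omega
    exact_mod_cast this
  have hθ : theta p = Real.log q / Real.log p := by
    rw [theta]
    congr 2
    rw [hq_def]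
    push_cast [hph]
    ring
  have hppow : (p : ℝ) ^ theta p = q := by
    rw [hθ, Real.rpow_def_of_pos hp0]
    have hmd : Real.log p * (Real.log q / Real.log p) = Real.log q := by
      field_simp
    rw [hmd, Real.exp_log hq0]
  have hbase : ∀ k : ℕ, ((p : ℝ) ^ k) ^ theta p = (q : ℝ) ^ k := by
    intro k
    rw [← Real.rpow_natCast (p : ℝ) k, ← Real.rpow_mul hp0.le,
      mul_comm ((k : ℕ) : ℝ) (theta p), Real.rpow_mul hp0.le, Real.rpow_natCast, hppow]
  have hrpow1 : ∀ k : ℕ, ((p ^ k : ℕ) : ℝ) ^ theta p = (q : ℝ) ^ k := by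
    intro k
    push_cast
    exact hbase k
  have hrpow2 : ∀ k : ℕ, ((2 * p ^ k : ℕ) : ℝ) ^ theta p = (2 : ℝ) ^ theta p * (q : ℝ) ^ k := by
    intro k
    push_cast
    rw [Real.mul_rpow (by norm_num) (by positivity), hbase k]
  have hqps : (q : ℝ) = (p : ℝ) * s := by
    have : q = p * s := by rw [hq_def, hs_def, hph]
    rw [this]
    push_cast
    ring
  have hsq : (s : ℝ) / q = 1 / p := by
    rw [hqps]
    rw [div_eq_div_iff (by positivity) (by positivity)]
    ring
  have hlim : Tendsto (fun k : ℕ => ((s : ℝ) / q) ^ k) atTop (nhds 0) := by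
    apply tendsto_pow_atTop_nhds_zero_of_lt_one (by positivity)
    rw [hsq, div_lt_one hp0]
    exact hp1
  -- first subsequence
  have hNA : ∀ k : ℕ, (Npas p (p ^ k) : ℝ) = ((q : ℝ) ^ k + (s : ℝ) ^ k) / 2 := by
    intro k
    have := congrArg (Nat.cast : ℕ → ℝ) (hA k)
    push_cast at this
    linarith
  have heq1 : ∀ k : ℕ, cpas p (p ^ k) = 1 / 2 + 1 / 2 * ((s : ℝ) / q) ^ k := by
    intro k
    rw [cpas, hrpow1 k, hNA k, div_pow]
    have hqk : ((q : ℝ) ^ k) ≠ 0 := by positivity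
    field_simp
  have tend1 : Tendsto (fun k : ℕ => cpas p (p ^ k)) atTop (nhds (1 / 2)) := by
    have t0 : Tendsto (fun k : ℕ => 1 / 2 + 1 / 2 * ((s : ℝ) / q) ^ k) atTop
        (nhds (1 / 2 + 1 / 2 * 0)) := tendsto_const_nhds.add (hlim.const_mul _)
    have t0' : Tendsto (fun k : ℕ => 1 / 2 + 1 / 2 * ((s : ℝ) / q) ^ k) atTop
        (nhds (1 / 2)) := by simpa using t0
    exact t0'.congr fun k => (heq1 k).symm
  have hφ1 : Tendsto (fun k : ℕ => p ^ k) atTop atTop :=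
    tendsto_pow_atTop_atTop_of_one_lt (by omega)
  have cluster1 : MapClusterPt ((1 : ℝ) / 2) atTop (fun u : ℕ => cpas p u) :=
    MapClusterPt.of_comp hφ1 tend1.mapClusterPt
  -- second subsequence
  have hNB : ∀ k : ℕ, (Npas p (2 * p ^ k) : ℝ) = (3 * (q : ℝ) ^ k + (s : ℝ) ^ k) / 2 := by
    intro k
    have := congrArg (Nat.cast : ℕ → ℝ) (hB k)
    push_cast at this
    linarith
  have h2θ : (0 : ℝ) < (2 : ℝ) ^ theta p := Real.rpow_pos_of_pos (by norm_num) _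
  have heq2 : ∀ k : ℕ,
      cpas p (2 * p ^ k) = (3 + ((s : ℝ) / q) ^ k) / (2 : ℝ) ^ (theta p + 1) := by
    intro k
    rw [cpas, hrpow2 k, hNB k, div_pow, Real.rpow_add_one (by norm_num : (2 : ℝ) ≠ 0)]
    have hqk : ((q : ℝ) ^ k) ≠ 0 := by positivity
    have hstep : (3 : ℝ) + (s : ℝ) ^ k / (q : ℝ) ^ k
        = (3 * (q : ℝ) ^ k + (s : ℝ) ^ k) / (q : ℝ) ^ k := by field_simp
    rw [hstep, div_div, div_div, div_eq_div_iff (by positivity) (by positivity)]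
    ring
  have tend2 : Tendsto (fun k : ℕ => cpas p (2 * p ^ k)) atTop
      (nhds (3 / (2 : ℝ) ^ (theta p + 1))) := by
    have t0 : Tendsto (fun k : ℕ => (3 + ((s : ℝ) / q) ^ k) / (2 : ℝ) ^ (theta p + 1)) atTop
        (nhds ((3 + 0) / (2 : ℝ) ^ (theta p + 1))) := (tendsto_const_nhds.add hlim).div_const _
    have t0' : Tendsto (fun k : ℕ => (3 + ((s : ℝ) / q) ^ k) / (2 : ℝ) ^ (theta p + 1)) atTop
        (nhds (3 / (2 : ℝ) ^ (theta p + 1))) := by simpa using t0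
    exact t0'.congr fun k => (heq2 k).symm
  have hφ2 : Tendsto (fun k : ℕ => 2 * p ^ k) atTop atTop :=
    tendsto_atTop_mono (fun k => Nat.le_mul_of_pos_left (p ^ k) (by omega)) hφ1
  have cluster2 : MapClusterPt (3 / (2 : ℝ) ^ (theta p + 1)) atTop (fun u : ℕ => cpas p u) :=
    MapClusterPt.of_comp hφ2 tend2.mapClusterPt
  -- the inequality
  have key3 : (3 : ℝ) < (2 : ℝ) ^ theta p := by
    have hn1 : p ^ 8 < q ^ 5 := by
      have hlt : (2 * h + 1) ^ 3 < (h + 1) ^ 5 := by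
        have e1 : (2 * h + 1) ^ 3 = 8 * h ^ 3 + 12 * h ^ 2 + 6 * h + 1 := by ring
        have e2 : (h + 1) ^ 5
            = h ^ 5 + 5 * h ^ 4 + 10 * h ^ 3 + 10 * h ^ 2 + 5 * h + 1 := by ring
        have f1 : h ^ 2 ≤ h ^ 3 := Nat.pow_le_pow_right (by omega) (by omega)
        have f2 : h ≤ h ^ 4 := by
          calc h = h ^ 1 := (pow_one h).symm
          _ ≤ h ^ 4 := Nat.pow_le_pow_right (by omega) (by omega)
        have f3 : 1 ≤ h ^ 5 := Nat.one_le_pow _ _ (by omega)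
        omega
      calc p ^ 8 = p ^ 5 * p ^ 3 := by ring
        _ < p ^ 5 * (h + 1) ^ 5 := by
            apply mul_lt_mul_of_pos_left _ (by positivity)
            rw [hph]
            exact hlt
        _ = q ^ 5 := by rw [hq_def, hph]; ring
    have e1 : 8 * Real.log p < 5 * Real.log q := by
      have hcast : ((p : ℝ)) ^ (8 : ℕ) < ((q : ℝ)) ^ (5 : ℕ) := by exact_mod_cast hn1
      have hl := Real.log_lt_log (by positivity) hcast
      rw [Real.log_pow, Real.log_pow] at hl
      push_cast at hl
      linarith
    have e2 : 5 * Real.log 3 < 8 * Real.log 2 := by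
      have h35 : (3 : ℝ) ^ (5 : ℕ) < (2 : ℝ) ^ (8 : ℕ) := by norm_num
      have hl := Real.log_lt_log (by positivity) h35
      rw [Real.log_pow, Real.log_pow] at hl
      push_cast at hl
      linarith
    have hlog2 : 0 < Real.log 2 := Real.log_pos (by norm_num)
    have hlog3 : 0 < Real.log 3 := Real.log_pos (by norm_num)
    have hlogq : 0 < Real.log q := Real.log_pos hq1
    have hmain : Real.log 3 * Real.log p < Real.log 2 * Real.log q := by
      nlinarith [mul_lt_mul'' e2 e1 (by positivity) (by positivity)]
    rw [show (3 : ℝ) = Real.exp (Real.log 3) from (Real.exp_log (by norm_num)).symm,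
      Real.rpow_def_of_pos (by norm_num : (0 : ℝ) < 2), Real.exp_lt_exp, hθ,
      ← mul_div_assoc, lt_div_iff₀ hlogp]
    exact hmain
  have ineq : 3 / (2 : ℝ) ^ (theta p + 1) < 1 / 2 := by
    rw [Real.rpow_add_one (by norm_num : (2 : ℝ) ≠ 0),
      div_lt_div_iff₀ (by positivity) (by norm_num)]
    nlinarith [key3]
  refine ⟨ineq, cluster1, cluster2, ?_⟩
  rintro ⟨L, hL⟩
  have huniq : ∀ x : ℝ, MapClusterPt x atTop (fun u : ℕ => cpas p u) → x = L := by
    intro x hx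
    have h2 : ClusterPt x (nhds L) := ClusterPt.mono hx hL
    exact eq_of_nhds_neBot h2.neBot
  have q1 := huniq _ cluster1
  have q2 := huniq _ cluster2
  rw [← q2] at q1
  linarith
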